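/- Every complete binary tree (rooted symmetric tree with daughter degree sequence (2,2,...,2)) admits a weakly α-labelling. -/
import Mathlib


/-- The `i`-th level vertex size of a rooted symmetric tree with `q` levels and
daughter degree sequence `k 1, …, k (q-1)`:
`h i = 1 + ∑_{j=i}^{q-1} k i * k (i+1) * ⋯ * k j`, so `h q = 1`. -/
def hlvl (q : ℕ) (k : ℕ → ℕ) (i : ℕ) : ℕ :=
  1 + ∑ j ∈ Finset.Icc i (q - 1), ∏ t ∈ Finset.Icc i j, k t

/-- The vertex set of a rooted symmetric tree with `q` levels: a vertex at level
`r.val + 1` is identified with its sequence of child indices `(x_1, …, x_{r.val})`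
where `0 ≤ x_i < k i`. -/
def Vertex (q : ℕ) (k : ℕ → ℕ) : Type :=
  Σ r : Fin q, (i : Fin r.val) → Fin (k (i.val + 1))

instance (q : ℕ) (k : ℕ → ℕ) : Fintype (Vertex q k) := by
  unfold Vertex; infer_instance

instance (q : ℕ) (k : ℕ → ℕ) : DecidableEq (Vertex q k) := by
  unfold Vertex; infer_instance

/-- The (1-based) child-index sequence of a vertex, extended by `0`. -/
def seqOf {q : ℕ} {k : ℕ → ℕ} (v : Vertex q k) (i : ℕ) : ℕ :=
  if h : i - 1 < v.1.val then (v.2 ⟨i - 1, h⟩).val else 0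

/-- Level of a vertex (root has level 1). -/
def level {q : ℕ} {k : ℕ → ℕ} (v : Vertex q k) : ℕ := v.1.val + 1

/-- Odd-level value of the labelling of Theorem 1. -/
def fOdd (q : ℕ) (k : ℕ → ℕ) (x : ℕ → ℕ) (r : ℕ) : ℕ :=
  ∑ i ∈ Finset.Icc 1 (r - 1), x i * hlvl q k (i + 1) + (r - 1) / 2

/-- Even-level value of the labelling of Theorem 1. -/
def fEven (q : ℕ) (k : ℕ → ℕ) (x : ℕ → ℕ) (r : ℕ) : ℕ :=
  (k 1 - x 1) * hlvl q k 2
    - ∑ i ∈ Finset.Icc 2 (r - 1), x i * hlvl q k (i + 1) - (r - 2) / 2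

/-- The vertex labelling `f` of Theorem 1. -/
def flabel (q : ℕ) (k : ℕ → ℕ) (v : Vertex q k) : ℕ :=
  if Even (level v) then fEven q k (seqOf v) (level v) else fOdd q k (seqOf v) (level v)

/-- The parent of a vertex (the root is mapped to itself). -/
def parent {q : ℕ} {k : ℕ → ℕ} (v : Vertex q k) : Vertex q k :=
  ⟨⟨v.1.val - 1, by have := v.1.isLt; omega⟩,
    fun i => v.2 (Fin.castLE (Nat.sub_le _ _) i)⟩

/-- The induced edge label on the edge joining `v` (non-root) to its parent. -/
def glabel (q : ℕ) (k : ℕ → ℕ) (v : Vertex q k) : ℕ :=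
  ((flabel q k v : ℤ) - (flabel q k (parent v) : ℤ)).natAbs

/-- Every complete binary tree (rooted symmetric tree with daughter degree
sequence `(2, 2, …, 2)`) admits a weakly α-labelling: a graceful labelling `f`
together with an integer `c` such that every edge `xy` satisfies
`f x ≤ c ≤ f y` or `f y ≤ c ≤ f x`. -/
def Flab : ℕ → List ℕ → ℕ
  | _, [] => 0
  | q, b :: t => (2 - (b + t.length) % 2) * (2 ^ (q - 1) - 1) - Flab (q - 1) t

lemma Flab_nil (q : ℕ) : Flab q [] = 0 := rfl

lemma Flab_cons (q b : ℕ) (t : List ℕ) :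
    Flab q (b :: t) = (2 - (b + t.length) % 2) * (2 ^ (q - 1) - 1) - Flab (q - 1) t := rfl

lemma two_le_pow {k : ℕ} (hk : 1 ≤ k) : 2 ≤ 2 ^ k := by
  calc (2:ℕ) = 2 ^ 1 := (pow_one 2).symm
  _ ≤ 2 ^ k := Nat.pow_le_pow_right (by norm_num) hk

lemma pow_pred {q : ℕ} (h : 1 ≤ q) : 2 ^ (q - 1) * 2 = 2 ^ q := by
  rw [← pow_succ, Nat.sub_add_cancel h]

lemma Flab_le {q : ℕ} {l : List ℕ} (h : l.length < q) : Flab q l ≤ 2 ^ q - 2 := by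
  cases l with
  | nil => simp [Flab_nil]
  | cons b t =>
    have hq : 1 ≤ q := by have := h; simp at this; omega
    have h2 := pow_pred hq
    have h4 := Nat.sub_le ((2 - (b + t.length) % 2) * (2 ^ (q - 1) - 1)) (Flab (q-1) t)
    rw [← Flab_cons] at h4
    have h5 : (2 - (b + t.length) % 2) * (2 ^ (q - 1) - 1) ≤ 2 * (2 ^ (q-1) - 1) :=
      Nat.mul_le_mul_right _ (by omega)
    have h1 : 1 ≤ 2 ^ (q-1) := Nat.one_le_two_pow
    omega

/-- The key linear form of the recursion. -/
lemma Flab_cons_add2 {q b : ℕ} {t : List ℕ} (h : t.length + 1 < q) :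
    ((b + t.length) % 2 = 1 ∧ Flab q (b :: t) + Flab (q - 1) t = 2 ^ (q - 1) - 1) ∨
    ((b + t.length) % 2 = 0 ∧ Flab q (b :: t) + Flab (q - 1) t = 2 ^ q - 2) := by
  have hF : Flab (q - 1) t ≤ 2 ^ (q - 1) - 2 := Flab_le (by omega)
  have h1 : 2 ≤ 2 ^ (q - 1) := two_le_pow (by omega)
  have h2 := pow_pred (show 1 ≤ q by omega)
  have hc := Flab_cons q b t
  rcases Nat.mod_two_eq_zero_or_one (b + t.length) with h3 | h3 <;> rw [h3] at hc <;>
    [right; left] <;> exact ⟨h3, by omega⟩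

lemma Flab_inj : ∀ (q : ℕ) (l l' : List ℕ), l.length < q → l'.length < q →
    (∀ x ∈ l, x ≤ 1) → (∀ x ∈ l', x ≤ 1) → Flab q l = Flab q l' → l = l' := by
  intro q
  induction q with
  | zero => intro l l' h _ _ _ _; omega
  | succ q ih =>
    intro l l' hl hl' el el' he
    match l, l' with
    | [], [] => rfl
    | [], b :: t =>
      exfalso
      have h1 : t.length + 1 < q + 1 := by simpa using hl'
      have e1 := Flab_cons_add2 (b := b) h1
      have hF : Flab q t ≤ 2 ^ q - 2 := Flab_le (by omega)
      have h2 : 2 ≤ 2 ^ q := two_le_pow (by omega)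
      have h3 := pow_pred (show 1 ≤ q + 1 by omega)
      simp only [Flab_nil, Nat.add_sub_cancel] at he e1
      omega
    | b :: t, [] =>
      exfalso
      have h1 : t.length + 1 < q + 1 := by simpa using hl
      have e1 := Flab_cons_add2 (b := b) h1
      have hF : Flab q t ≤ 2 ^ q - 2 := Flab_le (by omega)
      have h2 : 2 ≤ 2 ^ q := two_le_pow (by omega)
      have h3 := pow_pred (show 1 ≤ q + 1 by omega)
      simp only [Flab_nil, Nat.add_sub_cancel] at he e1
      omega
    | b :: t, b' :: t' =>
      have h1 : t.length + 1 < q + 1 := by simpa using hl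
      have h1' : t'.length + 1 < q + 1 := by simpa using hl'
      have e1 := Flab_cons_add2 (b := b) h1
      have e2 := Flab_cons_add2 (b := b') h1'
      simp only [Nat.add_sub_cancel] at e1 e2
      have hF : Flab q t ≤ 2 ^ q - 2 := Flab_le (by omega)
      have hF' : Flab q t' ≤ 2 ^ q - 2 := Flab_le (by omega)
      have h2 : 2 ≤ 2 ^ q := two_le_pow (by omega)
      have h3 := pow_pred (show 1 ≤ q + 1 by omega)
      have hb : b ≤ 1 := el b (by simp)
      have hb' : b' ≤ 1 := el' b' (by simp)
      have htt : t = t' := by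
        refine ih t t' (by omega) (by omega)
          (fun x hx => el x (List.mem_cons_of_mem _ hx))
          (fun x hx => el' x (List.mem_cons_of_mem _ hx)) ?_
        rcases e1 with ⟨m1, e1⟩ | ⟨m1, e1⟩ <;> rcases e2 with ⟨m2, e2⟩ | ⟨m2, e2⟩ <;> omega
      subst htt
      have hbb : b = b' := by
        rcases e1 with ⟨m1, e1⟩ | ⟨m1, e1⟩ <;> rcases e2 with ⟨m2, e2⟩ | ⟨m2, e2⟩ <;> omega
      rw [hbb]

lemma Dabs : ∀ (q : ℕ) (l : List ℕ), l.length < q → l ≠ [] →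
    1 ≤ ((Flab q l : ℤ) - (Flab q l.dropLast : ℤ)).natAbs ∧
    ((Flab q l : ℤ) - (Flab q l.dropLast : ℤ)).natAbs ≤ 2 ^ q - 2 := by
  intro q
  induction q with
  | zero => intro l h _; omega
  | succ q ih =>
    intro l hl hne
    match l with
    | [b] =>
      have e1 := Flab_cons_add2 (q := q + 1) (b := b) (t := []) (by simpa using hl)
      simp only [Nat.add_sub_cancel, List.length_nil, Nat.add_zero, Flab_nil] at e1
      have h2 : 2 ≤ 2 ^ q := two_le_pow (by simp at hl; omega)
      have h3 := pow_pred (show 1 ≤ q + 1 by omega)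
      simp only [show ([b] : List ℕ).dropLast = [] from rfl, Flab_nil]
      rcases e1 with ⟨m1, e1⟩ | ⟨m1, e1⟩ <;> omega
    | b :: x :: t =>
      have hlen : t.length + 1 < q := by simpa using hl
      have h1 : (x :: t).length + 1 < q + 1 := by simpa using hl
      have e1 := Flab_cons_add2 (q := q + 1) (b := b) (t := x :: t) h1
      have e2 := Flab_cons_add2 (q := q + 1) (b := b) (t := (x :: t).dropLast)
        (by simp; omega)
      simp only [Nat.add_sub_cancel, List.length_dropLast, List.length_cons] at e1 e2
      obtain ⟨ih1, ih2⟩ := ih (x :: t) (by simp; omega) (by simp)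
      rw [show (b :: x :: t).dropLast = b :: (x :: t).dropLast from rfl]
      have h2 : 2 ≤ 2 ^ q := two_le_pow (by omega)
      have h3 := pow_pred (show 1 ≤ q + 1 by omega)
      rcases e1 with ⟨m1, e1⟩ | ⟨m1, e1⟩ <;> rcases e2 with ⟨m2, e2⟩ | ⟨m2, e2⟩ <;> omega

lemma Dinj : ∀ (q : ℕ) (l l' : List ℕ), l.length < q → l'.length < q →
    (∀ x ∈ l, x ≤ 1) → (∀ x ∈ l', x ≤ 1) → l ≠ [] → l' ≠ [] →
    ((Flab q l : ℤ) - (Flab q l.dropLast : ℤ)).natAbs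
      = ((Flab q l' : ℤ) - (Flab q l'.dropLast : ℤ)).natAbs → l = l' := by
  intro q
  induction q with
  | zero => intro l l' h _ _ _ _ _ _; omega
  | succ q ih =>
    intro l l' hl hl' el el' hn hn' he
    match l, l' with
    | [b], [b'] =>
      have e1 := Flab_cons_add2 (q := q + 1) (b := b) (t := []) (by simpa using hl)
      have e2 := Flab_cons_add2 (q := q + 1) (b := b') (t := []) (by simpa using hl')
      simp only [Nat.add_sub_cancel, List.length_nil, Nat.add_zero, Flab_nil] at e1 e2
      have h2 : 2 ≤ 2 ^ q := two_le_pow (by simp at hl; omega)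
      have h3 := pow_pred (show 1 ≤ q + 1 by omega)
      have hb : b ≤ 1 := el b (by simp)
      have hb' : b' ≤ 1 := el' b' (by simp)
      simp only [show ([b] : List ℕ).dropLast = [] from rfl,
        show ([b'] : List ℕ).dropLast = [] from rfl, Flab_nil] at he
      have : b = b' := by
        rcases e1 with ⟨m1, e1⟩ | ⟨m1, e1⟩ <;> rcases e2 with ⟨m2, e2⟩ | ⟨m2, e2⟩ <;> omega
      rw [this]
    | [b], b' :: x' :: t' =>
      exfalso
      have hlen' : t'.length + 1 < q := by simpa using hl'
      have e1 := Flab_cons_add2 (q := q + 1) (b := b) (t := []) (by simpa using hl)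
      have e2 := Flab_cons_add2 (q := q + 1) (b := b') (t := x' :: t') (by simpa using hl')
      have e3 := Flab_cons_add2 (q := q + 1) (b := b') (t := (x' :: t').dropLast)
        (by simp; omega)
      simp only [Nat.add_sub_cancel, List.length_nil, Nat.add_zero, Flab_nil,
        List.length_dropLast, List.length_cons] at e1 e2 e3
      obtain ⟨hB1, hB2⟩ := Dabs q (x' :: t') (by simp; omega) (by simp)
      have h2 : 2 ≤ 2 ^ q := two_le_pow (by omega)
      have h3 := pow_pred (show 1 ≤ q + 1 by omega)
      rw [show (b' :: x' :: t').dropLast = b' :: (x' :: t').dropLast from rfl] at he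
      simp only [show ([b] : List ℕ).dropLast = [] from rfl, Flab_nil] at he
      rcases e1 with ⟨m1, e1⟩ | ⟨m1, e1⟩ <;> rcases e2 with ⟨m2, e2⟩ | ⟨m2, e2⟩ <;>
        rcases e3 with ⟨m3, e3⟩ | ⟨m3, e3⟩ <;> omega
    | b :: x :: t, [b'] =>
      exfalso
      have hlen : t.length + 1 < q := by simpa using hl
      have e1 := Flab_cons_add2 (q := q + 1) (b := b') (t := []) (by simpa using hl')
      have e2 := Flab_cons_add2 (q := q + 1) (b := b) (t := x :: t) (by simpa using hl)
      have e3 := Flab_cons_add2 (q := q + 1) (b := b) (t := (x :: t).dropLast)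
        (by simp; omega)
      simp only [Nat.add_sub_cancel, List.length_nil, Nat.add_zero, Flab_nil,
        List.length_dropLast, List.length_cons] at e1 e2 e3
      obtain ⟨hB1, hB2⟩ := Dabs q (x :: t) (by simp; omega) (by simp)
      have h2 : 2 ≤ 2 ^ q := two_le_pow (by omega)
      have h3 := pow_pred (show 1 ≤ q + 1 by omega)
      rw [show (b :: x :: t).dropLast = b :: (x :: t).dropLast from rfl] at he
      simp only [show ([b'] : List ℕ).dropLast = [] from rfl, Flab_nil] at he
      rcases e1 with ⟨m1, e1⟩ | ⟨m1, e1⟩ <;> rcases e2 with ⟨m2, e2⟩ | ⟨m2, e2⟩ <;>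
        rcases e3 with ⟨m3, e3⟩ | ⟨m3, e3⟩ <;> omega
    | b :: x :: t, b' :: x' :: t' =>
      have hlen : t.length + 1 < q := by simpa using hl
      have hlen' : t'.length + 1 < q := by simpa using hl'
      have e1 := Flab_cons_add2 (q := q + 1) (b := b) (t := x :: t) (by simpa using hl)
      have e2 := Flab_cons_add2 (q := q + 1) (b := b) (t := (x :: t).dropLast)
        (by simp; omega)
      have e3 := Flab_cons_add2 (q := q + 1) (b := b') (t := x' :: t') (by simpa using hl')
      have e4 := Flab_cons_add2 (q := q + 1) (b := b') (t := (x' :: t').dropLast)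
        (by simp; omega)
      simp only [Nat.add_sub_cancel, List.length_dropLast, List.length_cons] at e1 e2 e3 e4
      obtain ⟨hA1, hA2⟩ := Dabs q (x :: t) (by simp; omega) (by simp)
      obtain ⟨hB1, hB2⟩ := Dabs q (x' :: t') (by simp; omega) (by simp)
      have h2 : 2 ≤ 2 ^ q := two_le_pow (by omega)
      have h3 := pow_pred (show 1 ≤ q + 1 by omega)
      have hb : b ≤ 1 := el b (by simp)
      have hb' : b' ≤ 1 := el' b' (by simp)
      rw [show (b :: x :: t).dropLast = b :: (x :: t).dropLast from rfl,
        show (b' :: x' :: t').dropLast = b' :: (x' :: t').dropLast from rfl] at he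
      have htt : x :: t = x' :: t' := by
        refine ih (x :: t) (x' :: t') (by simp; omega) (by simp; omega)
          (fun z hz => el z (List.mem_cons_of_mem _ hz))
          (fun z hz => el' z (List.mem_cons_of_mem _ hz)) (by simp) (by simp) ?_
        rcases e1 with ⟨m1, e1⟩ | ⟨m1, e1⟩ <;> rcases e2 with ⟨m2, e2⟩ | ⟨m2, e2⟩ <;>
          rcases e3 with ⟨m3, e3⟩ | ⟨m3, e3⟩ <;> rcases e4 with ⟨m4, e4⟩ | ⟨m4, e4⟩ <;> omega
      injection htt with hx ht; subst hx; subst ht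
      have hbb : b = b' := by
        rcases e1 with ⟨m1, e1⟩ | ⟨m1, e1⟩ <;> rcases e3 with ⟨m3, e3⟩ | ⟨m3, e3⟩ <;> omega
      rw [hbb]

lemma Fstraddle {q : ℕ} {l : List ℕ} (hl : l.length < q) (hne : l ≠ []) :
    (Flab q l ≤ 2 ^ (q - 1) - 1 ∧ 2 ^ (q - 1) - 1 ≤ Flab q l.dropLast) ∨
    (Flab q l.dropLast ≤ 2 ^ (q - 1) - 1 ∧ 2 ^ (q - 1) - 1 ≤ Flab q l) := by
  match l with
  | [b] =>
    have e1 := Flab_cons_add2 (q := q) (b := b) (t := []) (by simpa using hl)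
    simp only [List.length_nil, Nat.add_zero, Flab_nil] at e1
    have hq : 2 ≤ q := by simp at hl; omega
    have h1 : 2 ≤ 2 ^ (q - 1) := two_le_pow (by omega)
    have h3 := pow_pred (show 1 ≤ q by omega)
    simp only [show ([b] : List ℕ).dropLast = [] from rfl, Flab_nil]
    rcases e1 with ⟨m1, e1⟩ | ⟨m1, e1⟩ <;> omega
  | b :: x :: t =>
    have hlen : t.length + 2 < q := by simpa using hl
    have e1 := Flab_cons_add2 (q := q) (b := b) (t := x :: t) (by simp; omega)
    have e2 := Flab_cons_add2 (q := q) (b := b) (t := (x :: t).dropLast) (by simp; omega)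
    simp only [List.length_dropLast, List.length_cons, Nat.add_sub_cancel] at e1 e2
    have hF1 : Flab (q - 1) (x :: t) ≤ 2 ^ (q - 1) - 2 := Flab_le (by simp; omega)
    have hF2 : Flab (q - 1) (x :: t).dropLast ≤ 2 ^ (q - 1) - 2 :=
      Flab_le (by simp; omega)
    have h1 : 2 ≤ 2 ^ (q - 1) := two_le_pow (by omega)
    have h3 := pow_pred (show 1 ≤ q by omega)
    rw [show (b :: x :: t).dropLast = b :: (x :: t).dropLast from rfl]
    rcases e1 with ⟨m1, e1⟩ | ⟨m1, e1⟩ <;> rcases e2 with ⟨m2, e2⟩ | ⟨m2, e2⟩ <;> omega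

def vlist {q : ℕ} (v : Vertex q (fun _ => 2)) : List ℕ :=
  List.ofFn (fun i : Fin v.1.val => (v.2 i).val)

lemma vlist_length {q : ℕ} (v : Vertex q (fun _ => 2)) :
    (vlist v).length = v.1.val := by simp [vlist]

lemma vlist_lt {q : ℕ} (v : Vertex q (fun _ => 2)) : (vlist v).length < q := by
  rw [vlist_length]; exact v.1.isLt

lemma vlist_mem {q : ℕ} (v : Vertex q (fun _ => 2)) : ∀ x ∈ vlist v, x ≤ 1 := by
  intro x hx
  simp only [vlist, List.mem_ofFn] at hx
  obtain ⟨i, rfl⟩ := hx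
  exact Nat.lt_succ_iff.mp (v.2 i).isLt

lemma vlist_inj {q : ℕ} {v w : Vertex q (fun _ => 2)} (h : vlist v = vlist w) :
    v = w := by
  have h1 : v.1 = w.1 := by
    apply Fin.ext
    rw [← vlist_length v, ← vlist_length w, h]
  obtain ⟨rv, bv⟩ := v
  obtain ⟨rw', bw⟩ := w
  simp only at h1
  subst h1
  simp only [vlist, List.ofFn_inj] at h
  have : bv = bw := funext fun i => Fin.ext (congrFun h i)
  rw [this]

lemma vlist_parent {q : ℕ} (v : Vertex q (fun _ => 2)) :
    vlist (parent v) = (vlist v).dropLast := by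
  apply List.ext_getElem
  · simp [vlist, parent]
  · intro i h1 h2
    simp [vlist, parent, List.getElem_dropLast, List.getElem_ofFn, Fin.castLE]

lemma vlist_ne {q : ℕ} (v : Vertex q (fun _ => 2)) (h : 0 < v.1.val) :
    vlist v ≠ [] := by
  intro hn
  have := vlist_length v
  rw [hn] at this
  simp at this
  omega

lemma sum_two_pow (q : ℕ) : ∑ i ∈ Finset.range q, 2 ^ i = 2 ^ q - 1 := by
  induction q with
  | zero => simp
  | succ n ih =>
    rw [Finset.sum_range_succ, ih]
    have h : (2:ℕ) ^ (n + 1) = 2 ^ n * 2 := pow_succ 2 n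
    have h1 : 1 ≤ 2 ^ n := Nat.one_le_two_pow
    omega

lemma card_vertex (q : ℕ) : Fintype.card (Vertex q (fun _ => 2)) = 2 ^ q - 1 := by
  have e : Vertex q (fun _ => 2) ≃ Σ r : Fin q, (Fin r.val → Fin 2) := Equiv.cast rfl
  rw [Fintype.card_congr e, Fintype.card_sigma]
  simp only [Fintype.card_fun, Fintype.card_fin]
  rw [Fin.sum_univ_eq_sum_range (fun i => 2 ^ i) q]
  exact sum_two_pow q


theorem binary_tree_weakly_alpha (q : ℕ) (hq : 1 ≤ q) :
    ∃ (f : Vertex q (fun _ => 2) → ℕ) (c : ℕ),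
      Function.Injective f ∧
      (∀ v, f v ≤ Fintype.card (Vertex q (fun _ => 2)) - 1) ∧
      (∀ v w : Vertex q (fun _ => 2), 0 < v.1.val → 0 < w.1.val →
        ((f v : ℤ) - (f (parent v) : ℤ)).natAbs =
          ((f w : ℤ) - (f (parent w) : ℤ)).natAbs → v = w) ∧
      (∀ v : Vertex q (fun _ => 2), 0 < v.1.val →
        (f v ≤ c ∧ c ≤ f (parent v)) ∨ (f (parent v) ≤ c ∧ c ≤ f v)) := by
  refine ⟨fun v => Flab q (vlist v), 2 ^ (q - 1) - 1, ?_, ?_, ?_, ?_⟩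
  · intro v w h
    exact vlist_inj (Flab_inj q _ _ (vlist_lt v) (vlist_lt w)
      (vlist_mem v) (vlist_mem w) h)
  · intro v
    rw [card_vertex]
    show Flab q (vlist v) ≤ 2 ^ q - 1 - 1
    have := Flab_le (vlist_lt v)
    omega
  · intro v w hv hw h
    simp only [vlist_parent] at h
    exact vlist_inj (Dinj q _ _ (vlist_lt v) (vlist_lt w) (vlist_mem v) (vlist_mem w)
      (vlist_ne v hv) (vlist_ne w hw) h)
  · intro v hv
    have := Fstraddle (vlist_lt v) (vlist_ne v hv)
    simpa only [vlist_parent] using this
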